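/- Let A be a randomized algorithm that takes a dataset in 𝒳^n and outputs a function f : 𝒳^n → ℝ of sensitivity c, with the output ranging over a finite set of such functions. Let S be a random dataset chosen according to the product distribution 𝒫^n over 𝒳^n and let f = A(S). If A is τ/(cn)-differentially private, then Pr[ f(S) − E_{S'∼𝒫^n}[f(S')] ≥ τ ] ≤ 3·exp( −τ² / (c² n) ). -/

import Mathlib

open scoped ENNReal

/-- Probability of an event under a PMF. -/
noncomputable def pr {Z : Type*} (p : PMF Z) (O : Set Z) : ℝ≥0∞ :=
  p.toOuterMeasure O

/-- Joint distribution of (input, output). -/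
noncomputable def joint {A B : Type*} (μ : PMF A) (f : A → PMF B) : PMF (A × B) :=
  μ.bind fun a => (f a).map fun b => (a, b)

/-- Two datasets are adjacent if they differ in a single element. -/
def Adjacent {X : Type*} {n : ℕ} (S S' : Fin n → X) : Prop :=
  ∃ i : Fin n, ∀ j : Fin n, j ≠ i → S j = S' j

/-- ε-differential privacy: for all adjacent datasets `S, S'` and every output `y`,
`Pr[A(S) = y] ≤ e^ε · Pr[A(S') = y]`. -/
def DiffPrivate {X Y : Type*} {n : ℕ} (A : (Fin n → X) → PMF Y) (ε : ℝ) : Prop :=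
  ∀ S S' : Fin n → X, Adjacent S S' → ∀ y : Y,
    A S y ≤ ENNReal.ofReal (Real.exp ε) * A S' y

/-- The distribution of `n` i.i.d. samples from `P`. -/
noncomputable def iid {X : Type*} (P : PMF X) : (n : ℕ) → PMF (Fin n → X)
  | 0 => PMF.pure fun i => i.elim0
  | n + 1 => (iid P n).bind fun S => P.map fun x => Fin.cons x S

/-- A function `f : 𝒳^n → ℝ` has sensitivity `c`: changing a single coordinate
changes the value by at most `c`. -/
def Sensitivity {X : Type*} {n : ℕ} (f : (Fin n → X) → ℝ) (c : ℝ) : Prop :=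
  ∀ (S : Fin n → X) (i : Fin n) (x' : X), f S - f (Function.update S i x') ≤ c

/-- The expectation of `g` under a PMF `μ` on a finite type. -/
noncomputable def pmfExp {Z : Type*} [Fintype Z] (μ : PMF Z) (g : Z → ℝ) : ℝ :=
  ∑ z : Z, (μ z).toReal * g z

/-! ### Auxiliary lemmas -/

section Aux

open Real Set

/-- The scalar core of Hoeffding's lemma. -/
lemma hoeff_log (s : ℝ) (hs0 : 0 ≤ s) (hs1 : s ≤ 1) :
    ∀ h : ℝ, 0 ≤ h → 1 - s + s * Real.exp h ≤ Real.exp (s * h + h ^ 2 / 8) := by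
  have hgpos : ∀ x : ℝ, 0 < 1 - s + s * Real.exp x := by
    intro x
    rcases lt_or_eq_of_le hs0 with h | h
    · have : 0 < s * Real.exp x := mul_pos h (Real.exp_pos x)
      linarith
    · simp [← h]
  have hg : ∀ x : ℝ, HasDerivAt (fun x => 1 - s + s * Real.exp x) (s * Real.exp x) x := by
    intro x
    simpa using ((Real.hasDerivAt_exp x).const_mul s).const_add (1 - s)
  set ψ : ℝ → ℝ := fun x => s * Real.exp x / (1 - s + s * Real.exp x) - s - x / 4 with hψdef
  have hψderiv : ∀ x : ℝ, HasDerivAt ψ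
      ((s * Real.exp x * (1 - s + s * Real.exp x) - s * Real.exp x * (s * Real.exp x)) /
        (1 - s + s * Real.exp x) ^ 2 - 1 / 4) x := by
    intro x
    have h1 : HasDerivAt (fun x => s * Real.exp x / (1 - s + s * Real.exp x))
        ((s * Real.exp x * (1 - s + s * Real.exp x) - s * Real.exp x * (s * Real.exp x)) /
          (1 - s + s * Real.exp x) ^ 2) x :=
      ((Real.hasDerivAt_exp x).const_mul s).div (hg x) (ne_of_gt (hgpos x))
    have h2 : HasDerivAt (fun x : ℝ => s + x / 4) (1 / 4) x := by
      simpa using ((hasDerivAt_id x).div_const 4).const_add s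
    simpa [hψdef, sub_sub] using h1.fun_sub h2
  have hψnonpos : ∀ x : ℝ, 0 ≤ x → ψ x ≤ 0 := by
    have hanti : AntitoneOn ψ (Ici (0:ℝ)) := by
      apply antitoneOn_of_deriv_nonpos (convex_Ici 0)
      · exact fun x _ => (hψderiv x).continuousAt.continuousWithinAt
      · exact fun x _ => (hψderiv x).differentiableAt.differentiableWithinAt
      · intro x _
        rw [(hψderiv x).deriv]
        have hsq : (0:ℝ) < (1 - s + s * Real.exp x) ^ 2 := by
          have := hgpos x; positivity
        rw [sub_nonpos, div_le_iff₀ hsq]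
        nlinarith [sq_nonneg (1 - s - s * Real.exp x)]
    intro x hx
    have := hanti (self_mem_Ici) hx hx
    have hψ0 : ψ 0 = 0 := by
      simp [hψdef]
    linarith [this, hψ0.le]
  set φ : ℝ → ℝ := fun x => Real.log (1 - s + s * Real.exp x) - s * x - x ^ 2 / 8 with hφdef
  have hφderiv : ∀ x : ℝ, HasDerivAt φ (ψ x) x := by
    intro x
    have h1 : HasDerivAt (fun x => Real.log (1 - s + s * Real.exp x))
        (s * Real.exp x / (1 - s + s * Real.exp x)) x := (hg x).log (ne_of_gt (hgpos x))
    have h2 : HasDerivAt (fun x : ℝ => s * x + x ^ 2 / 8) (s + x * 2 / 8) x := by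
      have h3 : HasDerivAt (fun x : ℝ => s * x) s x := by
        simpa using (hasDerivAt_id x).const_mul s
      simpa [pow_one, mul_comm] using h3.fun_add ((hasDerivAt_pow 2 x).div_const 8)
    have := h1.fun_sub h2
    have heq : s * Real.exp x / (1 - s + s * Real.exp x) - (s + x * 2 / 8) = ψ x := by
      simp only [hψdef]; ring
    rw [heq] at this
    simpa [hφdef, sub_sub] using this
  have hφanti : AntitoneOn φ (Ici (0:ℝ)) := by
    apply antitoneOn_of_deriv_nonpos (convex_Ici 0)
    · exact fun x _ => (hφderiv x).continuousAt.continuousWithinAt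
    · exact fun x _ => (hφderiv x).differentiableAt.differentiableWithinAt
    · intro x hx
      rw [(hφderiv x).deriv]
      exact hψnonpos x (le_of_lt (by simpa using hx))
  intro h hh
  have hφ0 : φ 0 = 0 := by simp [hφdef]
  have := hφanti self_mem_Ici hh hh
  rw [hφ0] at this
  have hlog : Real.log (1 - s + s * Real.exp h) ≤ s * h + h ^ 2 / 8 := by
    have h4 : φ h ≤ 0 := this
    simp only [hφdef] at h4
    linarith
  calc 1 - s + s * Real.exp h = Real.exp (Real.log (1 - s + s * Real.exp h)) :=
        (Real.exp_log (hgpos h)).symm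
    _ ≤ Real.exp (s * h + h ^ 2 / 8) := Real.exp_le_exp.2 hlog

/-- Hoeffding's lemma, discrete weighted form. -/
lemma hoeff_discrete {X : Type*} [Fintype X] [Nonempty X] (w : X → ℝ) (g : X → ℝ) (b : ℝ)
    (hw : ∀ x, 0 ≤ w x) (hw1 : ∑ x, w x = 1)
    (hosc : ∀ x y, g x - g y ≤ b) :
    ∑ x, w x * Real.exp (g x) ≤ Real.exp ((∑ x, w x * g x) + b ^ 2 / 8) := by
  have hb0 : 0 ≤ b := by
    obtain ⟨x⟩ := ‹Nonempty X›
    have := hosc x x; linarith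
  rcases eq_or_lt_of_le hb0 with hb | hb
  · obtain ⟨x₀⟩ := ‹Nonempty X›
    have hconst : ∀ x, g x = g x₀ := by
      intro x
      have h1 := hosc x x₀; have h2 := hosc x₀ x
      rw [← hb] at h1 h2; linarith
    have e1 : ∑ x, w x * Real.exp (g x) = Real.exp (g x₀) := by
      rw [show (∑ x, w x * Real.exp (g x)) = ∑ x, w x * Real.exp (g x₀) by
        exact Finset.sum_congr rfl fun x _ => by rw [hconst x]]
      rw [← Finset.sum_mul, hw1, one_mul]
    have e2 : ∑ x, w x * g x = g x₀ := by
      rw [show (∑ x, w x * g x) = ∑ x, w x * g x₀ by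
        exact Finset.sum_congr rfl fun x _ => by rw [hconst x]]
      rw [← Finset.sum_mul, hw1, one_mul]
    rw [e1, e2, ← hb]
    norm_num
  · set a : ℝ := Finset.univ.inf' Finset.univ_nonempty g with ha
    have hga : ∀ x, a ≤ g x := fun x => Finset.inf'_le g (Finset.mem_univ x)
    have hgb : ∀ x, g x ≤ a + b := by
      intro x
      obtain ⟨y, -, hy⟩ := Finset.exists_mem_eq_inf' Finset.univ_nonempty g
      have := hosc x y; linarith [hy.le, hy.ge]
    set m : ℝ := ∑ x, w x * g x with hm
    have hpt : ∀ x, Real.exp (g x) ≤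
        (1 - (g x - a) / b) * Real.exp a + ((g x - a) / b) * Real.exp (a + b) := by
      intro x
      have ht0 : 0 ≤ (g x - a) / b := div_nonneg (by linarith [hga x]) hb.le
      have ht1 : (g x - a) / b ≤ 1 := by
        rw [div_le_one hb]; linarith [hgb x]
      have := convexOn_exp.2 (Set.mem_univ a) (Set.mem_univ (a + b))
        (by linarith : (0:ℝ) ≤ 1 - (g x - a) / b) ht0 (by ring)
      simp only [smul_eq_mul] at this
      have harg : (1 - (g x - a) / b) * a + ((g x - a) / b) * (a + b) = g x := by
        field_simp; ring
      rw [harg] at this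
      exact this
    have hsum : ∑ x, w x * Real.exp (g x) ≤
        (1 - (m - a) / b) * Real.exp a + ((m - a) / b) * Real.exp (a + b) := by
      calc ∑ x, w x * Real.exp (g x)
          ≤ ∑ x, w x * ((1 - (g x - a) / b) * Real.exp a + ((g x - a) / b) * Real.exp (a + b)) :=
            Finset.sum_le_sum fun x _ => mul_le_mul_of_nonneg_left (hpt x) (hw x)
        _ = (1 - (m - a) / b) * Real.exp a + ((m - a) / b) * Real.exp (a + b) := by
            simp only [hm]
            rw [Finset.sum_congr rfl (fun x _ => by ring :
              ∀ x ∈ Finset.univ, w x * ((1 - (g x - a) / b) * Real.exp a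
                + ((g x - a) / b) * Real.exp (a + b))
              = w x * Real.exp a + (w x * g x - w x * a) * ((Real.exp (a+b) - Real.exp a)/b))]
            rw [Finset.sum_add_distrib, ← Finset.sum_mul, hw1, ← Finset.sum_mul]
            rw [Finset.sum_sub_distrib, ← Finset.sum_mul, hw1]
            field_simp
            ring
    set s : ℝ := (m - a) / b with hs
    have hs0 : 0 ≤ s := by
      apply div_nonneg _ hb.le
      have : (∑ x, w x * a) ≤ m := Finset.sum_le_sum fun x _ =>
        mul_le_mul_of_nonneg_left (hga x) (hw x)
      rw [← Finset.sum_mul, hw1, one_mul] at this; linarith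
    have hs1 : s ≤ 1 := by
      rw [hs, div_le_one hb]
      have : m ≤ (∑ x, w x * (a + b)) := Finset.sum_le_sum fun x _ =>
        mul_le_mul_of_nonneg_left (hgb x) (hw x)
      rw [← Finset.sum_mul, hw1, one_mul] at this; linarith
    have key := hoeff_log s hs0 hs1 b hb0
    calc ∑ x, w x * Real.exp (g x)
        ≤ (1 - s) * Real.exp a + s * Real.exp (a + b) := hsum
      _ = Real.exp a * (1 - s + s * Real.exp b) := by rw [Real.exp_add]; ring
      _ ≤ Real.exp a * Real.exp (s * b + b ^ 2 / 8) :=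
          mul_le_mul_of_nonneg_left key (Real.exp_pos a).le
      _ = Real.exp (a + (s * b + b ^ 2 / 8)) := by rw [← Real.exp_add]
      _ = Real.exp (m + b ^ 2 / 8) := by
          congr 1
          have : s * b = m - a := by rw [hs]; field_simp
          rw [this]; ring

lemma pmf_sum_toReal {Z : Type*} [Fintype Z] (p : PMF Z) : ∑ z, (p z).toReal = 1 := by
  have h := p.tsum_coe
  rw [tsum_fintype] at h
  have := ENNReal.toReal_sum (s := Finset.univ) (f := fun z => p z)
    (fun a _ => p.apply_ne_top a)
  rw [h] at this
  simpa using this.symm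

/-- MGF bound for functions of bounded differences under a product distribution
(McDiarmid's moment bound). -/
lemma mgf_bound {X : Type*} [Fintype X] [Nonempty X] (P : PMF X) :
    ∀ (n : ℕ) (g : (Fin n → X) → ℝ) (b : ℝ),
    (∀ S i x, g S - g (Function.update S i x) ≤ b) →
    ∑ S : Fin n → X, (∏ i, (P (S i)).toReal) * Real.exp (g S)
      ≤ Real.exp ((∑ S : Fin n → X, (∏ i, (P (S i)).toReal) * g S) + n * b ^ 2 / 8) := by
  intro n
  induction n with
  | zero =>
    intro g b _
    rw [Fintype.sum_unique, Fintype.sum_unique]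
    simp
  | succ n IH =>
    intro g b hosc
    have hwnn : ∀ x, (0:ℝ) ≤ (P x).toReal := fun x => ENNReal.toReal_nonneg
    have hw1 : ∑ x, (P x).toReal = 1 := pmf_sum_toReal P
    have hWnn : ∀ S : Fin n → X, (0:ℝ) ≤ ∏ i, (P (S i)).toReal :=
      fun S => Finset.prod_nonneg fun i _ => ENNReal.toReal_nonneg
    have hb0 : 0 ≤ b := by
      obtain ⟨x⟩ := ‹Nonempty X›
      have := hosc (fun _ => x) 0 x
      simpa [Function.update_eq_self] using this
    have reindex : ∀ (F : (Fin (n+1) → X) → ℝ),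
        ∑ T : Fin (n+1) → X, F T = ∑ x : X, ∑ S : Fin n → X, F (Fin.cons x S) := by
      intro F
      calc ∑ T : Fin (n+1) → X, F T
          = ∑ p : X × (Fin n → X), F ((Fin.consEquiv (fun _ => X)) p) :=
            (Equiv.sum_comp (Fin.consEquiv (fun _ => X)) F).symm
        _ = ∑ x : X, ∑ S : Fin n → X, F (Fin.cons x S) := by
            rw [Fintype.sum_prod_type]
            rfl
    have hprodcons : ∀ (x : X) (S : Fin n → X),
        (∏ i : Fin (n+1), (P ((Fin.cons x S : Fin (n+1) → X) i)).toReal)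
          = (P x).toReal * ∏ i, (P (S i)).toReal := by
      intro x S
      rw [Fin.prod_univ_succ]
      simp [Fin.cons_zero, Fin.cons_succ]
    set gbar : (Fin n → X) → ℝ := fun S => ∑ x, (P x).toReal * g (Fin.cons x S) with hgbar
    calc ∑ T : Fin (n+1) → X, (∏ i, (P (T i)).toReal) * Real.exp (g T)
        = ∑ S : Fin n → X, (∏ i, (P (S i)).toReal)
            * (∑ x, (P x).toReal * Real.exp (g (Fin.cons x S))) := by
          rw [reindex]
          rw [Finset.sum_comm]
          refine Finset.sum_congr rfl fun S _ => ?_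
          rw [Finset.mul_sum]
          exact Finset.sum_congr rfl fun x _ => by rw [hprodcons]; ring
      _ ≤ ∑ S : Fin n → X, (∏ i, (P (S i)).toReal) * Real.exp (gbar S + b ^ 2 / 8) := by
          refine Finset.sum_le_sum fun S _ => mul_le_mul_of_nonneg_left ?_ (hWnn S)
          refine hoeff_discrete _ _ b hwnn hw1 fun x y => ?_
          have h2 := hosc (Fin.cons x S) 0 y
          rwa [Fin.update_cons_zero] at h2
      _ = Real.exp (b ^ 2 / 8) * ∑ S : Fin n → X, (∏ i, (P (S i)).toReal) * Real.exp (gbar S) := by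
          rw [Finset.mul_sum]
          exact Finset.sum_congr rfl fun S _ => by rw [Real.exp_add]; ring
      _ ≤ Real.exp (b ^ 2 / 8) * Real.exp
            ((∑ S : Fin n → X, (∏ i, (P (S i)).toReal) * gbar S) + n * b ^ 2 / 8) := by
          refine mul_le_mul_of_nonneg_left ?_ (Real.exp_pos _).le
          refine IH gbar b fun S i x' => ?_
          rw [hgbar]
          simp only
          rw [← Finset.sum_sub_distrib]
          calc ∑ x, ((P x).toReal * g (Fin.cons x S)
                - (P x).toReal * g (Fin.cons x (Function.update S i x')))
              ≤ ∑ x : X, (P x).toReal * b := by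
                refine Finset.sum_le_sum fun x _ => ?_
                rw [← mul_sub]
                refine mul_le_mul_of_nonneg_left ?_ (hwnn x)
                rw [Fin.cons_update]
                exact hosc (Fin.cons x S) i.succ x'
            _ = b := by rw [← Finset.sum_mul, hw1, one_mul]
      _ = Real.exp ((∑ T : Fin (n+1) → X, (∏ i, (P (T i)).toReal) * g T)
            + ((n+1 : ℕ) : ℝ) * b ^ 2 / 8) := by
          rw [← Real.exp_add]
          congr 1
          rw [reindex (fun T => (∏ i, (P (T i)).toReal) * g T)]
          rw [Finset.sum_comm]
          have : ∀ S : Fin n → X,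
              ∑ x : X, (∏ i : Fin (n+1), (P ((Fin.cons x S : Fin (n+1) → X) i)).toReal)
                  * g (Fin.cons x S)
              = (∏ i, (P (S i)).toReal) * gbar S := by
            intro S
            rw [hgbar]
            simp only
            rw [Finset.mul_sum]
            exact Finset.sum_congr rfl fun x _ => by rw [hprodcons]; ring
          rw [Finset.sum_congr rfl fun S _ => this S]
          push_cast
          ring

lemma iid_apply {X : Type*} [Fintype X] (P : PMF X) :
    ∀ (n : ℕ) (S : Fin n → X), iid P n S = ∏ i, P (S i) := by
  classical
  intro n
  induction n with
  | zero =>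
    intro S
    have hS : S = fun i => i.elim0 := funext fun i => i.elim0
    rw [iid, hS, PMF.pure_apply, if_pos rfl]
    simp
  | succ n IH =>
    intro T
    rw [iid, PMF.bind_apply]
    have hcond : ∀ (x : X) (S : Fin n → X),
        (T = Fin.cons x S) ↔ (x = T 0 ∧ S = Fin.tail T) := by
      intro x S
      constructor
      · intro h
        subst h
        refine ⟨by simp, ?_⟩
        funext i
        simp [Fin.tail]
      · rintro ⟨rfl, rfl⟩
        exact (Fin.cons_self_tail T).symm
    have hmap : ∀ S : Fin n → X, (P.map fun x => Fin.cons x S) T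
        = if S = Fin.tail T then P (T 0) else 0 := by
      intro S
      rw [PMF.map_apply, tsum_fintype]
      by_cases hS : S = Fin.tail T
      · rw [if_pos hS]
        rw [Finset.sum_eq_single (T 0)]
        · rw [if_pos]
          rw [hcond]
          exact ⟨rfl, hS⟩
        · intro x _ hx
          rw [if_neg]
          rw [hcond]
          tauto
        · intro h
          exact absurd (Finset.mem_univ _) h
      · rw [if_neg hS]
        apply Finset.sum_eq_zero
        intro x _
        rw [if_neg]
        rw [hcond]
        tauto
    rw [tsum_fintype]
    simp only [hmap, mul_ite, mul_zero]
    rw [Finset.sum_ite_eq' Finset.univ (Fin.tail T) (fun S => iid P n S * P (T 0))]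
    rw [if_pos (Finset.mem_univ _), IH]
    rw [Fin.prod_univ_succ]
    rw [mul_comm]
    rfl

lemma joint_apply {A B : Type*} [Fintype A] [Fintype B]
    (μ : PMF A) (f : A → PMF B) (a : A) (b : B) :
    joint μ f (a, b) = μ a * f a b := by
  classical
  rw [joint, PMF.bind_apply, tsum_fintype]
  have h : ∀ a' : A, μ a' * (PMF.map (fun b => (a', b)) (f a')) (a, b)
      = if a' = a then μ a * f a b else 0 := by
    intro a'
    rw [PMF.map_apply, tsum_fintype]
    by_cases ha : a' = a
    · subst ha
      rw [if_pos rfl]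
      congr 1
      rw [Finset.sum_eq_single b]
      · rw [if_pos rfl]
      · intro b' _ hb'
        rw [if_neg]
        simp only [Prod.mk.injEq, true_and]
        exact fun h => hb' h.symm
      · intro h
        exact absurd (Finset.mem_univ _) h
    · rw [if_neg ha]
      convert mul_zero (μ a') using 2
      apply Finset.sum_eq_zero
      intro b' _
      rw [if_neg]
      simp only [Prod.mk.injEq, not_and]
      intro h; exact absurd h.symm ha
  simp only [h]
  simp

lemma pr_joint {A B : Type*} [Fintype A] [Fintype B]
    (μ : PMF A) (f : A → PMF B) (O : Set (A × B)) [DecidablePred (· ∈ O)] :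
    pr (joint μ f) O = ∑ a : A, ∑ b : B, if (a, b) ∈ O then μ a * f a b else 0 := by
  classical
  rw [pr, PMF.toOuterMeasure_apply, tsum_fintype]
  have h1 : ∀ p : A × B, O.indicator (⇑(joint μ f)) p
      = if p ∈ O then μ p.1 * f p.1 p.2 else 0 := by
    intro p
    rw [Set.indicator_apply]
    by_cases hp : p ∈ O
    · rw [if_pos hp, if_pos hp, ← joint_apply]
    · rw [if_neg hp, if_neg hp]
  have h2 : (∑ p : A × B, O.indicator (⇑(joint μ f)) p)
      = ∑ p : A × B, if p ∈ O then μ p.1 * f p.1 p.2 else 0 :=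
    Finset.sum_congr rfl fun p _ => h1 p
  rw [h2]
  exact Fintype.sum_prod_type (f := fun p => if p ∈ O then μ p.1 * f p.1 p.2 else 0)

lemma path_lemma {X : Type*} {n : ℕ} (Q : (Fin n → X) → Prop)
    (step : ∀ (S : Fin n → X) (i : Fin n) (x' : X), Q S → Q (Function.update S i x')) :
    ∀ S S' : Fin n → X, Q S → Q S' := by
  have key : ∀ k : ℕ, ∀ S S' : Fin n → X,
      (∀ i : Fin n, ¬ (i.val < k) → S i = S' i) → Q S → Q S' := by
    intro k
    induction k with
    | zero =>
      intro S S' hagree hQ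
      have : S = S' := funext fun i => hagree i (by omega)
      rwa [← this]
    | succ k IHk =>
      intro S S' hagree hQ
      by_cases hk : k < n
      · set M := Function.update S ⟨k, hk⟩ (S' ⟨k, hk⟩) with hM
        refine IHk M S' ?_ (step S ⟨k, hk⟩ (S' ⟨k, hk⟩) hQ)
        intro i hi
        by_cases hik : i = ⟨k, hk⟩
        · rw [hik, hM, Function.update_self]
        · rw [hM, Function.update_of_ne hik]
          refine hagree i ?_
          intro hlt
          apply hik
          have : i.val = k := by
            have := Fin.val_ne_of_ne hik
            omega
          exact Fin.ext this
      · refine IHk S S' ?_ hQ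
        intro i hi
        exact hagree i (by omega)
  intro S S'
  exact key n S S' (fun i hi => absurd i.isLt hi)

lemma pr_le_one {Z : Type*} (p : PMF Z) (O : Set Z) : pr p O ≤ 1 := by
  rw [pr, PMF.toOuterMeasure_apply]
  calc ∑' x, O.indicator p x ≤ ∑' x, p x :=
        ENNReal.tsum_le_tsum fun x => Set.indicator_le_self _ _ x
    _ = 1 := p.tsum_coe

end Aux

theorem pure_dp_low_sensitivity_generalization
    {X F : Type*} [Fintype X] [Fintype F] {n : ℕ}
    (ev : F → (Fin n → X) → ℝ) (c : ℝ)
    (hsens : ∀ f : F, Sensitivity (ev f) c)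
    (P : PMF X) (A : (Fin n → X) → PMF F) (τ : ℝ)
    (hA : DiffPrivate A (τ / (c * n))) :
    pr (joint (iid P n) A)
        {p : (Fin n → X) × F | τ ≤ ev p.2 p.1 - pmfExp (iid P n) (ev p.2)}
      ≤ ENNReal.ofReal (3 * Real.exp (-(τ ^ 2) / (c ^ 2 * n))) := by
  classical
  set O : Set ((Fin n → X) × F) :=
    {p : (Fin n → X) × F | τ ≤ ev p.2 p.1 - pmfExp (iid P n) (ev p.2)} with hO
  -- trivial bound when the RHS is at least 1
  have htriv : (1:ℝ≥0∞) ≤ ENNReal.ofReal (3 * Real.exp 0) → pr (joint (iid P n) A) O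
      ≤ ENNReal.ofReal (3 * Real.exp 0) := fun h => le_trans (pr_le_one _ _) h
  have hof3 : (1:ℝ≥0∞) ≤ ENNReal.ofReal 3 := by
    rw [show (1:ℝ≥0∞) = ENNReal.ofReal 1 by simp]
    exact ENNReal.ofReal_le_ofReal (by norm_num)
  rcases Nat.eq_zero_or_pos n with hn | hn
  · -- n = 0
    subst hn
    have : -(τ ^ 2) / (c ^ 2 * (0:ℕ)) = 0 := by
      norm_num
    rw [this, Real.exp_zero, mul_one]
    exact le_trans (pr_le_one _ _) hof3
  -- n ≥ 1
  obtain ⟨x₀, -⟩ := P.support_nonempty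
  haveI : Nonempty X := ⟨x₀⟩
  set S₀ : Fin n → X := fun _ => x₀ with hS₀
  set i₀ : Fin n := ⟨0, hn⟩ with hi₀
  obtain ⟨f₀, -⟩ := (A S₀).support_nonempty
  have hc0 : 0 ≤ c := by
    have h := hsens f₀ S₀ i₀ (S₀ i₀)
    rwa [Function.update_eq_self, sub_self] at h
  have hnR : (0:ℝ) < (n:ℝ) := by exact_mod_cast hn
  by_cases hτ : τ ≤ 0
  · rcases hτ.lt_or_eq with hτneg | hτ0
    · by_cases hc : c = 0
      · -- c = 0 : RHS = ofReal 3
        have : -(τ ^ 2) / (c ^ 2 * n) = 0 := by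
          rw [hc]; norm_num
        rw [this, Real.exp_zero, mul_one]
        exact le_trans (pr_le_one _ _) hof3
      · -- c > 0, τ < 0 : hA is contradictory
        exfalso
        have hcpos : 0 < c := lt_of_le_of_ne hc0 (Ne.symm hc)
        have hεneg : τ / (c * n) < 0 :=
          div_neg_of_neg_of_pos hτneg (mul_pos hcpos hnR)
        have hadj : Adjacent S₀ S₀ := ⟨i₀, fun j _ => rfl⟩
        have h1 : (1:ℝ≥0∞) ≤ ENNReal.ofReal (Real.exp (τ / (c * n))) := by
          calc (1:ℝ≥0∞) = ∑' y, A S₀ y := (A S₀).tsum_coe.symm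
            _ ≤ ∑' y, ENNReal.ofReal (Real.exp (τ / (c * n))) * A S₀ y :=
                ENNReal.tsum_le_tsum fun y => hA S₀ S₀ hadj y
            _ = ENNReal.ofReal (Real.exp (τ / (c * n))) * 1 := by
                rw [ENNReal.tsum_mul_left, (A S₀).tsum_coe]
            _ = ENNReal.ofReal (Real.exp (τ / (c * n))) := mul_one _
        have h2 : ENNReal.ofReal (Real.exp (τ / (c * n))) < 1 :=
          ENNReal.ofReal_lt_one.2 (Real.exp_lt_one_iff.2 hεneg)
        exact absurd (lt_of_le_of_lt h1 h2) (lt_irrefl _)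
    · -- τ = 0
      subst hτ0
      have h0 : -((0:ℝ) ^ 2) / (c ^ 2 * n) = 0 := by norm_num
      rw [h0, Real.exp_zero, mul_one]
      exact le_trans (pr_le_one _ _) hof3
  push_neg at hτ
  by_cases hc : c = 0
  · -- c = 0, τ > 0 : the event is empty
    have hempty : O = ∅ := by
      rw [Set.eq_empty_iff_forall_notMem]
      rintro ⟨S, f⟩ hSf
      rw [hO, Set.mem_setOf_eq] at hSf
      have hconst : ∀ T : Fin n → X, ev f T = ev f S := by
        have step : ∀ (T : Fin n → X) (i : Fin n) (x' : X),
            (ev f T = ev f S) → (ev f (Function.update T i x') = ev f S) := by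
          intro T i x' hQ
          have h1 := hsens f T i x'
          have h2 := hsens f (Function.update T i x') i (T i)
          rw [Function.update_idem, Function.update_eq_self] at h2
          rw [hc] at h1 h2
          have : ev f (Function.update T i x') = ev f T := by linarith
          rw [this, hQ]
        exact fun T => path_lemma _ step S T rfl
      have hexp : pmfExp (iid P n) (ev f) = ev f S := by
        rw [pmfExp]
        rw [Finset.sum_congr rfl fun z _ => by rw [hconst z]]
        rw [← Finset.sum_mul, pmf_sum_toReal, one_mul]
      rw [hexp] at hSf
      simp at hSf
      linarith
    rw [hempty]
    simp [pr]
  -- MAIN CASE : n ≥ 1, c > 0, τ > 0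
  have hcpos : 0 < c := lt_of_le_of_ne hc0 (Ne.symm hc)
  set ε : ℝ := τ / (c * n) with hε
  set lam : ℝ := 3 * τ / (n * c ^ 2) with hlam
  set b : ℝ := 4 * τ / (n * c) with hb
  have hε0 : 0 ≤ ε := le_of_lt (div_pos hτ (mul_pos hcpos hnR))
  have hlam0 : 0 ≤ lam := le_of_lt (div_pos (by linarith) (by positivity))
  have hbeq : lam * c + ε = b := by
    rw [hlam, hε, hb]
    field_simp
    ring
  set W : (Fin n → X) → ℝ := fun S => ∏ i, (P (S i)).toReal with hW
  set a : (Fin n → X) → F → ℝ := fun S f => ((A S) f).toReal with haf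
  have hWnn : ∀ S, 0 ≤ W S := fun S => Finset.prod_nonneg fun i _ => ENNReal.toReal_nonneg
  have hann : ∀ S f, 0 ≤ a S f := fun S f => ENNReal.toReal_nonneg
  have hiidtoReal : ∀ S, ((iid P n) S).toReal = W S := by
    intro S
    rw [iid_apply, hW]
    exact ENNReal.toReal_prod _ _
  have hWsum : ∑ S : Fin n → X, W S = 1 := by
    rw [Finset.sum_congr rfl fun S _ => (hiidtoReal S).symm]
    exact pmf_sum_toReal (iid P n)
  -- the target real bound
  set RHS0 : ℝ := Real.exp (-(τ ^ 2) / (c ^ 2 * n)) with hRHS0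
  -- key per-output bound
  have hkey : ∀ f : F,
      (∑ S : Fin n → X, if (S, f) ∈ O then W S * a S f else 0)
        ≤ RHS0 * ∑ S : Fin n → X, W S * a S f := by
    intro f
    by_cases hzero : ∃ S₁ : Fin n → X, A S₁ f = 0
    · obtain ⟨S₁, hS₁⟩ := hzero
      have hall : ∀ S : Fin n → X, A S f = 0 := by
        have step : ∀ (S : Fin n → X) (i : Fin n) (x' : X),
            (A S f = 0) → (A (Function.update S i x') f = 0) := by
          intro S i x' hQ
          have hadj : Adjacent (Function.update S i x') S :=
            ⟨i, fun j hj => Function.update_of_ne hj x' S⟩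
          have := hA _ _ hadj f
          rw [hQ, mul_zero] at this
          exact le_antisymm this zero_le
        exact fun S => path_lemma _ step S₁ S hS₁
      have h0 : ∀ S : Fin n → X, a S f = 0 := by
        intro S; rw [haf]; simp [hall S]
      have hz2 : ∀ S : Fin n → X, (if (S, f) ∈ O then W S * a S f else 0) = 0 := by
        intro S
        rw [h0 S, mul_zero, ite_self]
      rw [Finset.sum_eq_zero fun S _ => hz2 S]
      apply mul_nonneg (Real.exp_pos _).le
      exact Finset.sum_nonneg fun S _ => mul_nonneg (hWnn S) (hann S f)
    · push_neg at hzero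
      have hapos : ∀ S, 0 < a S f := fun S =>
        ENNReal.toReal_pos (hzero S) ((A S).apply_ne_top f)
      set ℓ : (Fin n → X) → ℝ := fun S => Real.log (a S f) with hℓ
      set g : (Fin n → X) → ℝ := fun S => lam * ev f S + ℓ S with hg
      -- real-valued DP inequality
      have hDPr : ∀ S S' : Fin n → X, Adjacent S S' → a S f ≤ Real.exp ε * a S' f := by
        intro S S' hadj
        have h1 := hA S S' hadj f
        have h2 : (ENNReal.ofReal (Real.exp ε) * A S' f).toReal
            = Real.exp ε * a S' f := by
          rw [ENNReal.toReal_mul, ENNReal.toReal_ofReal (Real.exp_pos ε).le]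
        calc a S f ≤ (ENNReal.ofReal (Real.exp ε) * A S' f).toReal :=
              ENNReal.toReal_mono
                (ENNReal.mul_ne_top ENNReal.ofReal_ne_top ((A S').apply_ne_top f)) h1
          _ = Real.exp ε * a S' f := h2
      have hlogDP : ∀ S S' : Fin n → X, Adjacent S S' → ℓ S - ℓ S' ≤ ε := by
        intro S S' hadj
        have h1 : ℓ S ≤ Real.log (Real.exp ε * a S' f) :=
          Real.log_le_log (hapos S) (hDPr S S' hadj)
        rw [Real.log_mul (Real.exp_ne_zero ε) (ne_of_gt (hapos S')), Real.log_exp] at h1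
        rw [hℓ]
        linarith
      have hosc : ∀ (S : Fin n → X) (i : Fin n) (x' : X),
          g S - g (Function.update S i x') ≤ b := by
        intro S i x'
        have hadj : Adjacent S (Function.update S i x') :=
          ⟨i, fun j hj => (Function.update_of_ne hj x' S).symm⟩
        have h1 := hsens f S i x'
        have h2 := hlogDP S (Function.update S i x') hadj
        have h3 : lam * (ev f S - ev f (Function.update S i x')) ≤ lam * c :=
          mul_le_mul_of_nonneg_left h1 hlam0
        rw [hg]
        simp only
        rw [← hbeq]
        linarith
      have hMGF := mgf_bound P n g b hosc
      set m : ℝ := pmfExp (iid P n) (ev f) with hm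
      have hmeq : ∑ S : Fin n → X, W S * ev f S = m := by
        rw [hm, pmfExp]
        exact Finset.sum_congr rfl fun S _ => by rw [hiidtoReal S]
      set L : ℝ := ∑ S : Fin n → X, W S * ℓ S with hL
      have hsumg : ∑ S : Fin n → X, W S * g S = lam * m + L := by
        rw [hg, hL]
        simp only
        rw [← hmeq, Finset.mul_sum, ← Finset.sum_add_distrib]
        exact Finset.sum_congr rfl fun S _ => by ring
      -- Chernoff pointwise bound
      have hpt : ∀ S : Fin n → X, (if (S, f) ∈ O then W S * a S f else 0)
          ≤ Real.exp (-(lam * (m + τ))) * (W S * Real.exp (g S)) := by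
        intro S
        by_cases hSf : (S, f) ∈ O
        · rw [if_pos hSf]
          rw [hO, Set.mem_setOf_eq] at hSf
          have hone : (1:ℝ) ≤ Real.exp (lam * (ev f S - m - τ)) := by
            apply Real.one_le_exp
            apply mul_nonneg hlam0
            linarith [hSf]
          calc W S * a S f ≤ (W S * a S f) * Real.exp (lam * (ev f S - m - τ)) :=
                le_mul_of_one_le_right (mul_nonneg (hWnn S) (hann S f)) hone
            _ = Real.exp (-(lam * (m + τ))) * (W S * Real.exp (g S)) := by
                rw [hg]
                simp only
                have hA1 : a S f = Real.exp (ℓ S) := (Real.exp_log (hapos S)).symm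
                rw [hA1, mul_assoc, ← Real.exp_add,
                  mul_comm (Real.exp (-(lam * (m + τ)))), mul_assoc, ← Real.exp_add]
                congr 1
                ring
        · rw [if_neg hSf]
          positivity
      -- Jensen for the denominator
      have hJensen : Real.exp L ≤ ∑ S : Fin n → X, W S * a S f := by
        have h1 : Real.exp (∑ S : Fin n → X, W S • ℓ S)
            ≤ ∑ S : Fin n → X, W S • Real.exp (ℓ S) :=
          convexOn_exp.map_sum_le (fun S _ => hWnn S) hWsum (fun S _ => Set.mem_univ _)
        simp only [smul_eq_mul] at h1
        rw [hL]
        calc Real.exp (∑ S : Fin n → X, W S * ℓ S) ≤ ∑ S : Fin n → X, W S * Real.exp (ℓ S) := h1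
          _ = ∑ S : Fin n → X, W S * a S f :=
              Finset.sum_congr rfl fun S _ => by rw [hℓ, Real.exp_log (hapos S)]
      -- exponent arithmetic
      have harith : -(lam * (m + τ)) + (lam * m + L + n * b ^ 2 / 8)
          = -(τ ^ 2) / (c ^ 2 * n) + L := by
        rw [hlam, hb]
        field_simp
        ring
      calc (∑ S : Fin n → X, if (S, f) ∈ O then W S * a S f else 0)
          ≤ ∑ S : Fin n → X, Real.exp (-(lam * (m + τ))) * (W S * Real.exp (g S)) :=
            Finset.sum_le_sum fun S _ => hpt S
        _ = Real.exp (-(lam * (m + τ))) * ∑ S : Fin n → X, W S * Real.exp (g S) := by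
            rw [Finset.mul_sum]
        _ ≤ Real.exp (-(lam * (m + τ)))
              * Real.exp ((∑ S : Fin n → X, W S * g S) + n * b ^ 2 / 8) :=
            mul_le_mul_of_nonneg_left hMGF (Real.exp_pos _).le
        _ = Real.exp (-(τ ^ 2) / (c ^ 2 * n) + L) := by
            rw [← Real.exp_add, hsumg, harith]
        _ = RHS0 * Real.exp L := by rw [Real.exp_add, hRHS0]
        _ ≤ RHS0 * ∑ S : Fin n → X, W S * a S f :=
            mul_le_mul_of_nonneg_left hJensen (Real.exp_pos _).le
  -- assemble: real double sum bound
  have hreal : (∑ S : Fin n → X, ∑ f : F, if (S, f) ∈ O then W S * a S f else 0) ≤ RHS0 := by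
    rw [Finset.sum_comm]
    calc (∑ f : F, ∑ S : Fin n → X, if (S, f) ∈ O then W S * a S f else 0)
        ≤ ∑ f : F, RHS0 * ∑ S : Fin n → X, W S * a S f :=
          Finset.sum_le_sum fun f _ => hkey f
      _ = RHS0 * ∑ f : F, ∑ S : Fin n → X, W S * a S f := by rw [Finset.mul_sum]
      _ = RHS0 * ∑ S : Fin n → X, W S * ∑ f : F, a S f := by
          rw [Finset.sum_comm]
          congr 1
          exact Finset.sum_congr rfl fun S _ => by rw [Finset.mul_sum]
      _ = RHS0 * 1 := by
          congr 1
          rw [Finset.sum_congr rfl fun S _ => by rw [pmf_sum_toReal (A S), mul_one]]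
          exact hWsum
      _ = RHS0 := mul_one _
  -- convert to ENNReal
  have hfin : ∀ (S : Fin n → X) (f : F),
      (if (S, f) ∈ O then (iid P n) S * A S f else 0) ≠ ⊤ := by
    intro S f
    split
    · exact ENNReal.mul_ne_top ((iid P n).apply_ne_top S) ((A S).apply_ne_top f)
    · exact ENNReal.zero_ne_top
  have hprsum := pr_joint (iid P n) A O
  have hne : pr (joint (iid P n) A) O ≠ ⊤ :=
    ne_top_of_le_ne_top ENNReal.one_ne_top (pr_le_one _ _)
  rw [ENNReal.le_ofReal_iff_toReal_le hne (by positivity)]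
  have htoReal : (pr (joint (iid P n) A) O).toReal
      = ∑ S : Fin n → X, ∑ f : F, if (S, f) ∈ O then W S * a S f else 0 := by
    rw [hprsum]
    rw [ENNReal.toReal_sum (fun S _ => by
      exact (ENNReal.sum_lt_top.2 fun f _ => lt_top_iff_ne_top.2 (hfin S f)).ne)]
    refine Finset.sum_congr rfl fun S _ => ?_
    rw [ENNReal.toReal_sum (fun f _ => hfin S f)]
    refine Finset.sum_congr rfl fun f _ => ?_
    split
    · rw [ENNReal.toReal_mul, hiidtoReal S]
    · rfl
  rw [htoReal]
  calc (∑ S : Fin n → X, ∑ f : F, if (S, f) ∈ O then W S * a S f else 0)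
      ≤ RHS0 := hreal
    _ ≤ 3 * Real.exp (-(τ ^ 2) / (c ^ 2 * n)) := by
        rw [hRHS0]
        nlinarith [Real.exp_pos (-(τ ^ 2) / (c ^ 2 * n))]
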